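/- For jointly distributed random variables X and Y with marginal distributions p and q, the mutual information satisfies I(X;Y) ≤ H(p) + H(q) − H(p ∧ q) ≤ min(H(p), H(q)). -/

import Mathlib

open Finset

/-- Majorization via prefix sums (vectors as functions ℕ → ℝ, padded with zeros). -/
def Maj (p q : ℕ → ℝ) : Prop :=
  ∀ i : ℕ, ∑ k ∈ Finset.range i, p k ≤ ∑ k ∈ Finset.range i, q k

/-- A probability vector of length `n`, sorted non-increasingly, zero beyond `n`. -/
def IsProbVec (n : ℕ) (p : ℕ → ℝ) : Prop :=
  (∀ i, 0 ≤ p i) ∧ (∀ i j : ℕ, i ≤ j → p j ≤ p i) ∧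
  (∑ k ∈ Finset.range n, p k = 1) ∧ (∀ i, n ≤ i → p i = 0)

/-- The greatest lower bound `p ∧ q` in the majorization lattice. -/
noncomputable def meet (p q : ℕ → ℝ) : ℕ → ℝ := fun i =>
  min (∑ k ∈ Finset.range (i + 1), p k) (∑ k ∈ Finset.range (i + 1), q k) -
  min (∑ k ∈ Finset.range i, p k) (∑ k ∈ Finset.range i, q k)

/-- Shannon entropy (base 2) of the first `n` components. -/
noncomputable def H2 (n : ℕ) (p : ℕ → ℝ) : ℝ :=
  ∑ k ∈ Finset.range n, -(p k * Real.logb 2 (p k))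

/-- Shannon entropy (base 2) of the entries of an `n × m` matrix. -/
noncomputable def Hmat (n m : ℕ) (M : ℕ → ℕ → ℝ) : ℝ :=
  ∑ i ∈ Finset.range n, ∑ j ∈ Finset.range m, -(M i j * Real.logb 2 (M i j))

/-- `M` is a coupling of `p` and `q`: nonnegative, row sums `p`, column sums `q`. -/
def IsCoupling (n m : ℕ) (p q : ℕ → ℝ) (M : ℕ → ℕ → ℝ) : Prop :=
  (∀ i j, 0 ≤ M i j) ∧ (∀ i < n, ∑ j ∈ Finset.range m, M i j = p i) ∧
  (∀ j < m, ∑ i ∈ Finset.range n, M i j = q j)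

/-- The `half` operator: duplicates and halves each component. -/
noncomputable def half (p : ℕ → ℝ) : ℕ → ℝ := fun i => p (i / 2) / 2

/-- Iterated `half` operator. -/
noncomputable def halfIter : ℕ → (ℕ → ℝ) → (ℕ → ℝ)
  | 0, p => p
  | (i + 1), p => half (halfIter i p)

/-- Iterated majorization meet of `p 0, p 1, …, p k`. -/
noncomputable def bigMeet (p : ℕ → ℕ → ℝ) : ℕ → (ℕ → ℝ)
  | 0 => p 0
  | (k + 1) => meet (bigMeet p k) (p (k + 1))


/-- Tangent line inequality for negMulLog. -/
lemma tangent_negMulLog {a b : ℝ} (ha : 0 < a) (hb : 0 ≤ b) :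
    Real.negMulLog b ≤ Real.negMulLog a + (-Real.log a - 1) * (b - a) := by
  rcases eq_or_lt_of_le hb with h | hb'
  · simp only [← h, Real.negMulLog_zero, Real.negMulLog]
    nlinarith [Real.log_le_sub_one_of_pos ha]
  · have h := Real.log_le_sub_one_of_pos (div_pos ha hb')
    rw [Real.log_div ha.ne' hb'.ne'] at h
    have h2 : b * (Real.log a - Real.log b) ≤ b * (a / b - 1) :=
      mul_le_mul_of_nonneg_left h hb'.le
    have h3 : b * (a / b - 1) = a - b := by field_simp
    rw [h3] at h2
    simp only [Real.negMulLog]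
    nlinarith

/-- Abel summation nonpositivity. -/
lemma abel_nonpos (s : ℕ) (c d : ℕ → ℝ)
    (hc : ∀ k, k + 1 < s → c k ≤ c (k + 1))
    (hD : ∀ i, i ≤ s → 0 ≤ ∑ k ∈ Finset.range i, d k)
    (hDs : ∑ k ∈ Finset.range s, d k = 0) :
    ∑ k ∈ Finset.range s, c k * d k ≤ 0 := by
  have h := Finset.sum_range_by_parts c d s
  simp only [smul_eq_mul] at h
  rw [h, hDs, mul_zero, zero_sub, neg_nonpos]
  apply Finset.sum_nonneg
  intro i hi
  rw [Finset.mem_range] at hi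
  have h1 : i + 1 < s := by omega
  exact mul_nonneg (by linarith [hc i h1]) (hD (i + 1) (by omega))

/-- Sum over a tail-zero range collapses. -/
lemma sum_range_of_tail_zero (f : ℕ → ℝ) {s N : ℕ} (hsN : s ≤ N)
    (hz : ∀ k, s ≤ k → k < N → f k = 0) :
    ∑ k ∈ Finset.range N, f k = ∑ k ∈ Finset.range s, f k := by
  rw [Finset.range_eq_Ico, ← Finset.sum_Ico_consecutive _ (Nat.zero_le s) hsN,
    ← Finset.range_eq_Ico]
  have : ∑ k ∈ Finset.Ico s N, f k = 0 := by
    apply Finset.sum_eq_zero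
    intro k hk
    rw [Finset.mem_Ico] at hk
    exact hz k hk.1 hk.2
  rw [this, add_zero]

/-- Key Schur-concavity lemma: if `a` is sorted non-increasing, nonneg, and is
majorized from above by `b` with equal totals, then entropy of `a` dominates. -/
lemma maj_negMulLog (N : ℕ) (a b : ℕ → ℝ) (ha0 : ∀ i, 0 ≤ a i) (hb0 : ∀ i, 0 ≤ b i)
    (hmono : ∀ i j : ℕ, i ≤ j → a j ≤ a i)
    (hpre : ∀ i, i ≤ N → ∑ k ∈ Finset.range i, a k ≤ ∑ k ∈ Finset.range i, b k)
    (htot : ∑ k ∈ Finset.range N, a k = ∑ k ∈ Finset.range N, b k) :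
    ∑ k ∈ Finset.range N, Real.negMulLog (b k) ≤ ∑ k ∈ Finset.range N, Real.negMulLog (a k) := by
  -- find the support cutoff s
  obtain ⟨s, hs1, hs2, hs3⟩ : ∃ s, s ≤ N ∧ (∀ k, k < s → 0 < a k) ∧
      (∀ k, s ≤ k → k < N → a k = 0) := by
    by_cases h : ∃ k, k < N ∧ a k = 0
    · refine ⟨Nat.find h, (Nat.find_spec h).1.le, ?_, ?_⟩
      · intro k hk
        have hkN : k < N := lt_trans hk (Nat.find_spec h).1
        have := Nat.find_min h hk
        push_neg at this
        exact lt_of_le_of_ne (ha0 k) (fun he => (this hkN) he.symm)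
      · intro k hsk _
        have := hmono _ _ hsk
        have h0 := (Nat.find_spec h).2
        linarith [ha0 k]
    · push_neg at h
      exact ⟨N, le_refl N, fun k hk => lt_of_le_of_ne (ha0 k) (fun he => h k hk he.symm),
        fun k h1 h2 => absurd h1 (by omega)⟩
  -- a vanishes on [s, N), so its prefix sums stabilize; conclude b's do too
  have hAs : ∑ k ∈ Finset.range N, a k = ∑ k ∈ Finset.range s, a k :=
    sum_range_of_tail_zero a hs1 hs3
  have hBle : ∑ k ∈ Finset.range s, b k ≤ ∑ k ∈ Finset.range N, b k := by
    rw [Finset.range_eq_Ico, Finset.range_eq_Ico, ← Finset.sum_Ico_consecutive _ (Nat.zero_le s) hs1,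
      ← Finset.range_eq_Ico]
    have : 0 ≤ ∑ k ∈ Finset.Ico s N, b k := Finset.sum_nonneg fun k _ => hb0 k
    linarith
  have hsb : ∑ k ∈ Finset.range s, a k = ∑ k ∈ Finset.range s, b k := by
    have h1 := hpre s hs1
    have h2 : ∑ k ∈ Finset.range N, b k = ∑ k ∈ Finset.range s, a k := by
      rw [← htot, hAs]
    linarith
  have hbz : ∀ k, s ≤ k → k < N → b k = 0 := by
    intro k hk1 hk2
    have hIco : ∑ k ∈ Finset.Ico s N, b k = 0 := by
      have : ∑ k ∈ Finset.range N, b k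
          = ∑ k ∈ Finset.range s, b k + ∑ k ∈ Finset.Ico s N, b k := by
        rw [Finset.range_eq_Ico, ← Finset.sum_Ico_consecutive _ (Nat.zero_le s) hs1,
          ← Finset.range_eq_Ico]
      rw [← htot, hAs, hsb] at this
      linarith
    have := (Finset.sum_eq_zero_iff_of_nonneg (fun i _ => hb0 i)).1 hIco
    exact this k (Finset.mem_Ico.2 ⟨hk1, hk2⟩)
  -- reduce to range s
  rw [sum_range_of_tail_zero (fun k => Real.negMulLog (a k)) hs1
      (fun k h1 h2 => by show Real.negMulLog (a k) = 0; rw [hs3 k h1 h2, Real.negMulLog_zero]),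
    sum_range_of_tail_zero (fun k => Real.negMulLog (b k)) hs1
      (fun k h1 h2 => by show Real.negMulLog (b k) = 0; rw [hbz k h1 h2, Real.negMulLog_zero])]
  -- tangent bound + Abel
  have key : ∑ k ∈ Finset.range s, Real.negMulLog (b k)
      ≤ ∑ k ∈ Finset.range s, (Real.negMulLog (a k) + (-Real.log (a k) - 1) * (b k - a k)) := by
    apply Finset.sum_le_sum
    intro k hk
    exact tangent_negMulLog (hs2 k (Finset.mem_range.1 hk)) (hb0 k)
  rw [Finset.sum_add_distrib] at key
  have abel : ∑ k ∈ Finset.range s, (-Real.log (a k) - 1) * (b k - a k) ≤ 0 := by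
    apply abel_nonpos
    · intro k hk
      have h1 : a (k + 1) ≤ a k := hmono k (k + 1) (Nat.le_succ k)
      have h2 : 0 < a (k + 1) := hs2 _ hk
      have := Real.log_le_log h2 h1
      linarith
    · intro i hi
      rw [Finset.sum_sub_distrib]
      linarith [hpre i (le_trans hi hs1)]
    · rw [Finset.sum_sub_distrib, hsb]
      ring
  linarith

/-- Prefix sums of the meet. -/
lemma meet_prefix (p q : ℕ → ℝ) (i : ℕ) :
    ∑ k ∈ Finset.range i, meet p q k
      = min (∑ k ∈ Finset.range i, p k) (∑ k ∈ Finset.range i, q k) := by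
  induction i with
  | zero => simp
  | succ i ih => rw [Finset.sum_range_succ, ih, meet]; ring

lemma prefix_mono (p : ℕ → ℝ) (h0 : ∀ i, 0 ≤ p i) {i j : ℕ} (hij : i ≤ j) :
    ∑ k ∈ Finset.range i, p k ≤ ∑ k ∈ Finset.range j, p k :=
  Finset.sum_le_sum_of_subset_of_nonneg (Finset.range_subset_range.2 hij) (fun k _ _ => h0 k)

lemma meet_nonneg (p q : ℕ → ℝ) (hp0 : ∀ i, 0 ≤ p i) (hq0 : ∀ i, 0 ≤ q i) (i : ℕ) :
    0 ≤ meet p q i := by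
  have h1 := prefix_mono p hp0 (Nat.le_succ i)
  have h2 := prefix_mono q hq0 (Nat.le_succ i)
  have := le_min (le_trans (min_le_left (∑ k ∈ Finset.range i, p k) _) h1)
    (le_trans (min_le_right (∑ k ∈ Finset.range i, p k) _) h2)
  simp only [meet]
  linarith

lemma meet_antitone (p q : ℕ → ℝ)
    (hp : ∀ i j : ℕ, i ≤ j → p j ≤ p i) (hq : ∀ i j : ℕ, i ≤ j → q j ≤ q i) :
    ∀ i j : ℕ, i ≤ j → meet p q j ≤ meet p q i := by
  have step : ∀ i, meet p q (i + 1) ≤ meet p q i := by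
    intro i
    set x1 := ∑ k ∈ Finset.range i, p k
    set x2 := ∑ k ∈ Finset.range (i + 1), p k
    set x3 := ∑ k ∈ Finset.range (i + 2), p k
    set y1 := ∑ k ∈ Finset.range i, q k
    set y2 := ∑ k ∈ Finset.range (i + 1), q k
    set y3 := ∑ k ∈ Finset.range (i + 2), q k
    have hx : x3 - x2 ≤ x2 - x1 := by
      have : x2 = x1 + p i := Finset.sum_range_succ p i
      have h3 : x3 = x2 + p (i + 1) := Finset.sum_range_succ p (i + 1)
      have := hp i (i + 1) (Nat.le_succ i)
      linarith
    have hy : y3 - y2 ≤ y2 - y1 := by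
      have : y2 = y1 + q i := Finset.sum_range_succ q i
      have h3 : y3 = y2 + q (i + 1) := Finset.sum_range_succ q (i + 1)
      have := hq i (i + 1) (Nat.le_succ i)
      linarith
    show min x3 y3 - min x2 y2 ≤ min x2 y2 - min x1 y1
    rcases le_total x2 y2 with h | h
    · rw [min_eq_left h]
      have h1 := min_le_left x3 y3
      have h2 := min_le_left x1 y1
      linarith
    · rw [min_eq_right h]
      have h1 := min_le_right x3 y3
      have h2 := min_le_right x1 y1
      linarith
  intro i j hij
  exact antitone_nat_of_succ_le step hij

/-- H2 in terms of negMulLog. -/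
lemma H2_eq_negMulLog (n : ℕ) (p : ℕ → ℝ) :
    H2 n p = (∑ k ∈ Finset.range n, Real.negMulLog (p k)) / Real.log 2 := by
  rw [H2, Finset.sum_div]
  apply Finset.sum_congr rfl
  intro k _
  simp only [Real.negMulLog, Real.logb]
  ring

/-- Prefix sums of a prob vec stabilize at 1. -/
lemma probvec_prefix_eq_one {n : ℕ} {p : ℕ → ℝ} (hp : IsProbVec n p) {i : ℕ} (h : n ≤ i) :
    ∑ k ∈ Finset.range i, p k = 1 := by
  rw [sum_range_of_tail_zero p h (fun k h1 _ => hp.2.2.2 k h1), hp.2.2.1]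

/-- Sum over a finset of naturals is at most the prefix sum of its cardinality,
for an antitone nonneg vector. -/
lemma sum_finset_le_prefix (p : ℕ → ℝ) (h0 : ∀ i, 0 ≤ p i)
    (hmono : ∀ i j : ℕ, i ≤ j → p j ≤ p i) (R : Finset ℕ) :
    ∑ r ∈ R, p r ≤ ∑ k ∈ Finset.range R.card, p k := by
  suffices H : ∀ (c : ℕ) (R : Finset ℕ), R.card = c →
      ∑ r ∈ R, p r ≤ ∑ k ∈ Finset.range R.card, p k from H R.card R rfl
  intro c
  induction c with
  | zero => intro R hc; rw [Finset.card_eq_zero] at hc; simp [hc]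
  | succ c ih =>
    intro R hc
    have hne : R.Nonempty := by rw [← Finset.card_pos, hc]; omega
    have hmax : c ≤ R.max' hne := by
      have hsub : R ⊆ Finset.range (R.max' hne + 1) :=
        fun x hx => Finset.mem_range.2 (Nat.lt_succ_of_le (Finset.le_max' R x hx))
      have := Finset.card_le_card hsub
      rw [hc, Finset.card_range] at this
      omega
    have hcard : (R.erase (R.max' hne)).card = c := by
      rw [Finset.card_erase_of_mem (R.max'_mem hne), hc]; omega
    rw [← Finset.sum_erase_add R _ (R.max'_mem hne), hc, Finset.sum_range_succ]
    exact add_le_add (by simpa [hcard] using ih _ hcard) (hmono c _ hmax)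

/-- Flattening a double sum. -/
lemma sum_flatten (n m : ℕ) (hm : 0 < m) (F : ℕ → ℕ → ℝ) :
    ∑ k ∈ Finset.range (n * m), F (k / m) (k % m)
      = ∑ i ∈ Finset.range n, ∑ j ∈ Finset.range m, F i j := by
  rw [← Finset.sum_product']
  apply Finset.sum_nbij' (fun k => (k / m, k % m)) (fun pr => pr.1 * m + pr.2)
  · intro k hk
    rw [Finset.mem_range] at hk
    refine Finset.mem_product.2 ⟨Finset.mem_range.2 ?_, Finset.mem_range.2 (Nat.mod_lt _ hm)⟩
    exact (Nat.div_lt_iff_lt_mul hm).2 hk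
  · intro pr hpr
    rw [Finset.mem_product, Finset.mem_range, Finset.mem_range] at hpr
    rw [Finset.mem_range]
    calc pr.1 * m + pr.2 < pr.1 * m + m := by omega
      _ = (pr.1 + 1) * m := by ring
      _ ≤ n * m := Nat.mul_le_mul_right m hpr.1
  · intro k _
    rw [mul_comm]
    exact Nat.div_add_mod k m
  · intro pr hpr
    rw [Finset.mem_product, Finset.mem_range, Finset.mem_range] at hpr
    have h1 : (pr.1 * m + pr.2) / m = pr.1 := by
      rw [mul_comm, Nat.mul_add_div hm, Nat.div_eq_of_lt hpr.2, add_zero]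
    have h2 : (pr.1 * m + pr.2) % m = pr.2 := by
      rw [mul_comm, Nat.mul_add_mod, Nat.mod_eq_of_lt hpr.2]
    rw [h1, h2]
  · intro k _
    rfl

/-- Any subfinset of matrix entries sums to at most the prefix of the row marginal. -/
lemma sum_subset_le_row (n m : ℕ) (p : ℕ → ℝ) (M : ℕ → ℕ → ℝ)
    (hM0 : ∀ i j, 0 ≤ M i j) (hrow : ∀ i < n, ∑ j ∈ Finset.range m, M i j = p i)
    (hp0 : ∀ i, 0 ≤ p i) (hpmono : ∀ i j : ℕ, i ≤ j → p j ≤ p i)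
    (S : Finset (ℕ × ℕ)) (hS : S ⊆ Finset.range n ×ˢ Finset.range m) :
    ∑ pr ∈ S, M pr.1 pr.2 ≤ ∑ k ∈ Finset.range S.card, p k := by
  have h1 : ∑ pr ∈ S, M pr.1 pr.2 ≤ ∑ pr ∈ (S.image Prod.fst) ×ˢ Finset.range m, M pr.1 pr.2 := by
    apply Finset.sum_le_sum_of_subset_of_nonneg
    · intro pr hpr
      have := Finset.mem_product.1 (hS hpr)
      exact Finset.mem_product.2 ⟨Finset.mem_image_of_mem Prod.fst hpr, this.2⟩
    · intro pr _ _
      exact hM0 pr.1 pr.2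
  have h2 : ∑ pr ∈ (S.image Prod.fst) ×ˢ Finset.range m, M pr.1 pr.2
      = ∑ r ∈ S.image Prod.fst, p r := by
    rw [Finset.sum_product]
    apply Finset.sum_congr rfl
    intro r hr
    obtain ⟨pr, hpr, hpr2⟩ := Finset.mem_image.1 hr
    have := (Finset.mem_product.1 (hS hpr)).1
    rw [hpr2] at this
    exact hrow r (Finset.mem_range.1 this)
  have h3 : ∑ r ∈ S.image Prod.fst, p r ≤ ∑ k ∈ Finset.range (S.image Prod.fst).card, p k :=
    sum_finset_le_prefix p hp0 hpmono _
  have h4 : ∑ k ∈ Finset.range (S.image Prod.fst).card, p k ≤ ∑ k ∈ Finset.range S.card, p k :=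
    prefix_mono p hp0 (Finset.card_image_le)
  linarith

/-- Column version. -/
lemma sum_subset_le_col (n m : ℕ) (q : ℕ → ℝ) (M : ℕ → ℕ → ℝ)
    (hM0 : ∀ i j, 0 ≤ M i j) (hcol : ∀ j < m, ∑ i ∈ Finset.range n, M i j = q j)
    (hq0 : ∀ i, 0 ≤ q i) (hqmono : ∀ i j : ℕ, i ≤ j → q j ≤ q i)
    (S : Finset (ℕ × ℕ)) (hS : S ⊆ Finset.range n ×ˢ Finset.range m) :
    ∑ pr ∈ S, M pr.1 pr.2 ≤ ∑ k ∈ Finset.range S.card, q k := by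
  have key := sum_subset_le_row m n q (fun j i => M i j) (fun i j => hM0 j i) hcol hq0 hqmono
    (S.image (Prod.swap)) ?_
  · have hswap : ∑ pr ∈ S.image Prod.swap, M pr.2 pr.1 = ∑ pr ∈ S, M pr.1 pr.2 := by
      rw [Finset.sum_image (fun x _ y _ h => Prod.swap_injective h)]
      rfl
    rw [hswap] at key
    have hcard : (S.image Prod.swap).card = S.card :=
      Finset.card_image_of_injective S Prod.swap_injective
    rw [hcard] at key
    exact key
  · intro pr hpr
    obtain ⟨x, hx, hx2⟩ := Finset.mem_image.1 hpr
    have := Finset.mem_product.1 (hS hx)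
    subst hx2
    exact Finset.mem_product.2 ⟨this.2, this.1⟩

lemma Hmat_eq_negMulLog (n m : ℕ) (M : ℕ → ℕ → ℝ) :
    Hmat n m M = (∑ i ∈ Finset.range n, ∑ j ∈ Finset.range m,
      Real.negMulLog (M i j)) / Real.log 2 := by
  rw [Hmat, Finset.sum_div]
  apply Finset.sum_congr rfl
  intro i _
  rw [Finset.sum_div]
  apply Finset.sum_congr rfl
  intro j _
  simp only [Real.negMulLog, Real.logb]
  ring

lemma meet_le_Hmat_aux (n m : ℕ) (hn : 0 < n) (hm : 0 < m) (p q : ℕ → ℝ) (M : ℕ → ℕ → ℝ)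
    (hp : IsProbVec n p) (hq : IsProbVec m q) (hM : IsCoupling n m p q M) :
    ∑ k ∈ Finset.range (n * m), Real.negMulLog (meet p q k)
      ≤ ∑ i ∈ Finset.range n, ∑ j ∈ Finset.range m, Real.negMulLog (M i j) := by
  set N := n * m with hN
  set g : ℕ → ℝ := fun k => M (k / m) (k % m) with hg
  set σ : Equiv.Perm (Fin N) := Tuple.sort (fun i : Fin N => -g i.val) with hσ
  set σ' : ℕ → ℕ := fun k => if h : k < N then (σ ⟨k, h⟩ : Fin N).val else k with hσ'
  set y : ℕ → ℝ := fun k => if k < N then g (σ' k) else 0 with hy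
  have hg0 : ∀ k, 0 ≤ g k := fun k => hM.1 _ _
  have hy0 : ∀ k, 0 ≤ y k := by
    intro k
    simp only [hy]
    split
    · exact hg0 _
    · exact le_refl 0
  have hσ'lt : ∀ k, k < N → σ' k < N := by
    intro k hk
    simp only [hσ', dif_pos hk]
    exact (σ ⟨k, hk⟩).isLt
  have hσ'inj : ∀ k1, k1 < N → ∀ k2, k2 < N → σ' k1 = σ' k2 → k1 = k2 := by
    intro k1 h1 k2 h2 he
    simp only [hσ', dif_pos h1, dif_pos h2] at he
    have h3 := σ.injective (Fin.val_injective he)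
    exact congrArg Fin.val h3
  have hymono : ∀ i j : ℕ, i ≤ j → y j ≤ y i := by
    intro i j hij
    by_cases hj : j < N
    · have hi : i < N := lt_of_le_of_lt hij hj
      have hmon := Tuple.monotone_sort (fun i : Fin N => -g i.val)
        (a := ⟨i, hi⟩) (b := ⟨j, hj⟩) hij
      simp only [Function.comp] at hmon
      simp only [hy, if_pos hi, if_pos hj, hσ', dif_pos hi, dif_pos hj]
      linarith
    · have : y j = 0 := by simp only [hy, if_neg hj]
      rw [this]
      exact hy0 i
  have hperm : ∀ F : ℝ → ℝ, ∑ k ∈ Finset.range N, F (y k)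
      = ∑ i ∈ Finset.range n, ∑ j ∈ Finset.range m, F (M i j) := by
    intro F
    rw [Finset.sum_range (fun k => F (y k))]
    have step : ∀ i : Fin N, F (y i.val) = (fun i : Fin N => F (g i.val)) (σ i) := by
      intro i
      simp only [hy, if_pos i.isLt, hσ', dif_pos i.isLt, Fin.eta]
    rw [Fintype.sum_congr _ _ step, Equiv.sum_comp σ (fun i : Fin N => F (g i.val)),
      ← Finset.sum_range (fun k => F (g k))]
    exact sum_flatten n m hm (fun a b => F (M a b))
  have hnN : n ≤ N := Nat.le_mul_of_pos_right n hm
  have hmN : m ≤ N := Nat.le_mul_of_pos_left m hn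
  have hytot : ∑ k ∈ Finset.range N, y k = 1 := by
    have := hperm id
    simp only [id] at this
    rw [this]
    have : ∀ i ∈ Finset.range n, ∑ j ∈ Finset.range m, M i j = p i := by
      intro i hi
      exact hM.2.1 i (Finset.mem_range.1 hi)
    rw [Finset.sum_congr rfl this, hp.2.2.1]
  have hmeettot : ∑ k ∈ Finset.range N, meet p q k = 1 := by
    rw [meet_prefix, probvec_prefix_eq_one hp hnN, probvec_prefix_eq_one hq hmN, min_self]
  -- prefix bound
  have hypre : ∀ i, i ≤ N → ∑ k ∈ Finset.range i, y k ≤ ∑ k ∈ Finset.range i, meet p q k := by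
    intro i hiN
    rw [meet_prefix]
    set S : Finset (ℕ × ℕ) := (Finset.range i).image (fun k => (σ' k / m, σ' k % m)) with hS
    have hinj : ∀ k1 ∈ Finset.range i, ∀ k2 ∈ Finset.range i,
        (σ' k1 / m, σ' k1 % m) = (σ' k2 / m, σ' k2 % m) → k1 = k2 := by
      intro k1 hk1 k2 hk2 he
      have h1 : k1 < N := lt_of_lt_of_le (Finset.mem_range.1 hk1) hiN
      have h2 : k2 < N := lt_of_lt_of_le (Finset.mem_range.1 hk2) hiN
      apply hσ'inj k1 h1 k2 h2
      rw [Prod.mk.injEq] at he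
      obtain ⟨e1, e2⟩ := he
      have r1 := Nat.div_add_mod (σ' k1) m
      have r2 := Nat.div_add_mod (σ' k2) m
      rw [e1, e2] at r1
      omega
    have hsum : ∑ k ∈ Finset.range i, y k = ∑ pr ∈ S, M pr.1 pr.2 := by
      rw [hS, Finset.sum_image hinj]
      apply Finset.sum_congr rfl
      intro k hk
      have hkN : k < N := lt_of_lt_of_le (Finset.mem_range.1 hk) hiN
      simp only [hy, if_pos hkN, hg]
    have hScard : S.card = i := by
      rw [hS, Finset.card_image_of_injOn (fun k1 hk1 k2 hk2 => hinj k1 hk1 k2 hk2),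
        Finset.card_range]
    have hSsub : S ⊆ Finset.range n ×ˢ Finset.range m := by
      intro pr hpr
      obtain ⟨k, hk, hk2⟩ := Finset.mem_image.1 hpr
      have hkN : k < N := lt_of_lt_of_le (Finset.mem_range.1 hk) hiN
      have hlt := hσ'lt k hkN
      rw [← hk2]
      refine Finset.mem_product.2 ⟨Finset.mem_range.2 ?_, Finset.mem_range.2 (Nat.mod_lt _ hm)⟩
      exact (Nat.div_lt_iff_lt_mul hm).2 hlt
    rw [hsum]
    apply le_min
    · have := sum_subset_le_row n m p M hM.1 hM.2.1 hp.1 hp.2.1 S hSsub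
      rwa [hScard] at this
    · have := sum_subset_le_col n m q M hM.1 hM.2.2 hq.1 hq.2.1 S hSsub
      rwa [hScard] at this
  have main := maj_negMulLog N y (meet p q) hy0
    (fun i => meet_nonneg p q hp.1 hq.1 i) hymono hypre (by rw [hytot, hmeettot])
  calc ∑ k ∈ Finset.range N, Real.negMulLog (meet p q k)
      ≤ ∑ k ∈ Finset.range N, Real.negMulLog (y k) := main
    _ = ∑ i ∈ Finset.range n, ∑ j ∈ Finset.range m, Real.negMulLog (M i j) :=
        hperm Real.negMulLog

lemma H2_le_H2_meet (n m : ℕ) (hn : 0 < n) (hm : 0 < m) (p q : ℕ → ℝ)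
    (hp : IsProbVec n p) (hq : IsProbVec m q) :
    H2 n p ≤ H2 (n * m) (meet p q) ∧ H2 m q ≤ H2 (n * m) (meet p q) := by
  have hlog : (0:ℝ) < Real.log 2 := Real.log_pos one_lt_two
  set N := n * m with hN
  have hnN : n ≤ N := Nat.le_mul_of_pos_right n hm
  have hmN : m ≤ N := Nat.le_mul_of_pos_left m hn
  have hmeettot : ∑ k ∈ Finset.range N, meet p q k = 1 := by
    rw [meet_prefix, probvec_prefix_eq_one hp hnN, probvec_prefix_eq_one hq hmN, min_self]
  constructor
  · have main := maj_negMulLog N (meet p q) p (meet_nonneg p q hp.1 hq.1) hp.1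
      (meet_antitone p q hp.2.1 hq.2.1)
      (fun i _ => by rw [meet_prefix]; exact min_le_left _ _)
      (by rw [hmeettot, probvec_prefix_eq_one hp hnN])
    have hext : ∑ k ∈ Finset.range N, Real.negMulLog (p k)
        = ∑ k ∈ Finset.range n, Real.negMulLog (p k) :=
      sum_range_of_tail_zero _ hnN (fun k h1 _ => by
        show Real.negMulLog (p k) = 0
        rw [hp.2.2.2 k h1, Real.negMulLog_zero])
    rw [H2_eq_negMulLog, H2_eq_negMulLog, ← hext]
    exact div_le_div_of_nonneg_right main hlog.le |>.trans_eq rfl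
  · have main := maj_negMulLog N (meet p q) q (meet_nonneg p q hp.1 hq.1) hq.1
      (meet_antitone p q hp.2.1 hq.2.1)
      (fun i _ => by rw [meet_prefix]; exact min_le_right _ _)
      (by rw [hmeettot, probvec_prefix_eq_one hq hmN])
    have hext : ∑ k ∈ Finset.range N, Real.negMulLog (q k)
        = ∑ k ∈ Finset.range m, Real.negMulLog (q k) :=
      sum_range_of_tail_zero _ hmN (fun k h1 _ => by
        show Real.negMulLog (q k) = 0
        rw [hq.2.2.2 k h1, Real.negMulLog_zero])
    rw [H2_eq_negMulLog, H2_eq_negMulLog, ← hext]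
    exact div_le_div_of_nonneg_right main hlog.le |>.trans_eq rfl

theorem stmt5 (n m : ℕ) (p q : ℕ → ℝ) (hp : IsProbVec n p) (hq : IsProbVec m q)
    (M : ℕ → ℕ → ℝ) (hM : IsCoupling n m p q M) :
    H2 n p + H2 m q - Hmat n m M ≤ H2 n p + H2 m q - H2 (n * m) (meet p q) ∧
    H2 n p + H2 m q - H2 (n * m) (meet p q) ≤ min (H2 n p) (H2 m q) := by
  have hlog : (0:ℝ) < Real.log 2 := Real.log_pos one_lt_two
  have hn : 0 < n := by
    rcases Nat.eq_zero_or_pos n with h | h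
    · exfalso
      have := hp.2.2.1
      rw [h] at this
      simp at this
    · exact h
  have hm : 0 < m := by
    rcases Nat.eq_zero_or_pos m with h | h
    · exfalso
      have := hq.2.2.1
      rw [h] at this
      simp at this
    · exact h
  obtain ⟨hA, hB⟩ := H2_le_H2_meet n m hn hm p q hp hq
  have hC : H2 (n * m) (meet p q) ≤ Hmat n m M := by
    rw [H2_eq_negMulLog, Hmat_eq_negMulLog]
    exact div_le_div_of_nonneg_right
      (meet_le_Hmat_aux n m hn hm p q M hp hq hM) hlog.le
  refine ⟨by linarith, le_min (by linarith) (by linarith)⟩
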